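/- Let f : ℝⁿ → ℝ be convex and differentiable, with componentwise Lipschitz constants L₁,…,Lₙ > 0, i.e. |∇ᵢf(x) − ∇ᵢf(x + h eᵢ)| ≤ Lᵢ|h| for all x ∈ ℝⁿ, h ∈ ℝ, i. Assume the minimizer set Ω is nonempty with f* = min f, and fix L̄ᵢ ≥ Lᵢ. Let p₁,…,pₙ be a probability distribution with pᵢ ≥ p_min > 0 for all i, let the indices i₀, i₁, … be drawn i.i.d. from this distribution, and define the coordinate descent iterates x_{k+1} = x_k − (∇_{i_k} f(x_k)/L̄_{i_k}) e_{i_k} from any x₀. Then k·(E[f(x_k)] − f*) → 0 as k → ∞, where E denotes expectation over the random indices i₀,…,i_{k−1}; that is, E[f(x_k)] − f* = o(1/k). -/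

import Mathlib

open Filter

lemma line_deriv {n : ℕ} (f : EuclideanSpace ℝ (Fin n) → ℝ) (f' : EuclideanSpace ℝ (Fin n) → EuclideanSpace ℝ (Fin n))
    (hderiv : ∀ y, HasGradientAt f (f' y) y) (x v : EuclideanSpace ℝ (Fin n)) (t : ℝ) :
    HasDerivAt (fun s : ℝ => f (x + s • v)) (inner ℝ (f' (x + t • v)) v : ℝ) t := by
  have h1 : HasDerivAt (fun s : ℝ => x + s • v) v t := by
    simpa using ((hasDerivAt_id t).smul_const v).const_add x
  have := (hderiv (x + t • v)).hasFDerivAt.comp_hasDerivAt t h1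
  simp at this
  exact this


lemma grad_ineq {n : ℕ} (f : EuclideanSpace ℝ (Fin n) → ℝ) (f' : EuclideanSpace ℝ (Fin n) → EuclideanSpace ℝ (Fin n))
    (hconv : ConvexOn ℝ Set.univ f) (hderiv : ∀ y, HasGradientAt f (f' y) y)
    (x y : EuclideanSpace ℝ (Fin n)) :
    f x + (inner ℝ (f' x) (y - x) : ℝ) ≤ f y := by
  set χ : ℝ → ℝ := fun s => f (x + s • (y - x)) with hχ
  have hcx : ConvexOn ℝ Set.univ χ := by
    have := hconv.comp_affineMap (AffineMap.lineMap x y : ℝ →ᵃ[ℝ] _)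
    have heq : χ = f ∘ (AffineMap.lineMap x y : ℝ →ᵃ[ℝ] _) := by
      funext s; simp [hχ, AffineMap.lineMap_apply]
      congr 1
      module
    rw [heq]
    simpa using this
  have hd : HasDerivAt χ (inner ℝ (f' x) (y - x) : ℝ) 0 := by
    have := line_deriv f f' hderiv x (y - x) 0
    simpa using this
  have := hcx.le_slope_of_hasDerivAt (Set.mem_univ 0) (Set.mem_univ 1) one_pos hd
  rw [slope_def_field] at this
  have h0 : χ 0 = f x := by simp [hχ]
  have h1 : χ 1 = f y := by simp [hχ]
  rw [h0, h1] at this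
  linarith [this]

lemma descent_lemma {n : ℕ} (f : EuclideanSpace ℝ (Fin n) → ℝ) (f' : EuclideanSpace ℝ (Fin n) → EuclideanSpace ℝ (Fin n))
    (hderiv : ∀ y, HasGradientAt f (f' y) y)
    (Li : Fin n → ℝ)
    (hcoordlip : ∀ (y : EuclideanSpace ℝ (Fin n)) (i : Fin n) (h : ℝ),
      |f' (y + h • EuclideanSpace.single i 1) i - f' y i| ≤ Li i * |h|)
    (x : EuclideanSpace ℝ (Fin n)) (i : Fin n) (h : ℝ) :
    f (x + h • EuclideanSpace.single i 1) ≤ f x + f' x i * h + Li i * h ^ 2 / 2 := by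
  set e : EuclideanSpace ℝ (Fin n) := EuclideanSpace.single i 1 with he
  set ψ : ℝ → ℝ := fun t => f (x + (t * h) • e) - (f x + f' x i * (t * h) + Li i * h ^ 2 * t ^ 2 / 2) with hψ
  set ψ' : ℝ → ℝ := fun t => h * f' (x + (t * h) • e) i - (f' x i * h + Li i * h ^ 2 * t) with hψ'
  have hda : ∀ t, HasDerivAt ψ (ψ' t) t := by
    intro t
    have h1 : HasDerivAt (fun s : ℝ => f (x + s • (h • e))) (inner ℝ (f' (x + t • (h • e))) (h • e) : ℝ) t :=
      line_deriv f f' hderiv x (h • e) t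
    have hsm : ∀ s : ℝ, s • (h • e) = (s * h) • e := fun s => by rw [smul_smul]
    have h1' : HasDerivAt (fun s : ℝ => f (x + (s * h) • e)) (h * f' (x + (t * h) • e) i) t := by
      have hv : (inner ℝ (f' (x + t • (h • e))) (h • e) : ℝ) = h * f' (x + (t * h) • e) i := by
        rw [real_inner_smul_right, hsm, he, EuclideanSpace.inner_single_right]
        simp
      rw [← hv]
      simpa only [hsm] using h1
    have h2 : HasDerivAt (fun s : ℝ => f x + f' x i * (s * h) + Li i * h ^ 2 * s ^ 2 / 2)
        (f' x i * h + Li i * h ^ 2 * t) t := by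
      have : HasDerivAt (fun s : ℝ => f x + f' x i * (s * h) + Li i * h ^ 2 * s ^ 2 / 2)
          (0 + f' x i * (1 * h) + Li i * h ^ 2 * (2 * t ^ 1) / 2) t := by
        exact (((hasDerivAt_const t (f x)).add (((hasDerivAt_id t).mul_const h).const_mul (f' x i))).add
          (((hasDerivAt_pow 2 t).const_mul (Li i * h ^ 2)).div_const 2))
      convert this using 1
      ring
    exact h1'.sub h2
  have hnonpos : ∀ t ∈ Set.Icc (0:ℝ) 1, ψ' t ≤ 0 := by
    intro t ht
    have hl := hcoordlip x i (t * h)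
    have : h * f' (x + (t * h) • e) i - f' x i * h ≤ Li i * h ^ 2 * t := by
      have h1 : h * f' (x + (t * h) • e) i - f' x i * h = h * (f' (x + (t * h) • e) i - f' x i) := by ring
      have h2 : h * (f' (x + (t * h) • e) i - f' x i) ≤ |h| * |f' (x + (t * h) • e) i - f' x i| := by
        calc h * (f' (x + (t * h) • e) i - f' x i) ≤ |h * (f' (x + (t * h) • e) i - f' x i)| := le_abs_self _
        _ = |h| * |f' (x + (t * h) • e) i - f' x i| := abs_mul _ _
      have h3 : |h| * |f' (x + (t * h) • e) i - f' x i| ≤ |h| * (Li i * |t * h|) := by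
        apply mul_le_mul_of_nonneg_left _ (abs_nonneg h)
        simpa [he] using hl
      have h4 : |h| * (Li i * |t * h|) = Li i * h ^ 2 * t := by
        rw [abs_mul, abs_of_nonneg ht.1, ← sq_abs h]
        ring
      linarith
    simp only [hψ']
    linarith
  have hanti : AntitoneOn ψ (Set.Icc (0:ℝ) 1) := by
    apply antitoneOn_of_hasDerivWithinAt_nonpos (convex_Icc 0 1) _ (fun t ht => (hda t).hasDerivWithinAt) _
    · exact fun t _ => (hda t).continuousAt.continuousWithinAt
    · intro t ht
      rw [interior_Icc] at ht
      exact hnonpos t ⟨le_of_lt ht.1, le_of_lt ht.2⟩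
  have := hanti (Set.mem_Icc.2 ⟨le_refl 0, zero_le_one⟩) (Set.mem_Icc.2 ⟨zero_le_one, le_refl 1⟩) zero_le_one
  simp only [hψ] at this
  simp only [zero_mul, zero_smul, add_zero, one_mul] at this
  nlinarith [this]

lemma nat_mul_tendsto_zero (a : ℕ → ℝ) (ha : ∀ k, 0 ≤ a k) (hmono : ∀ k, a (k+1) ≤ a k)
    (hsum : Summable a) : Tendsto (fun k : ℕ => (k:ℝ) * a k) atTop (nhds 0) := by
  have hanti : Antitone a := antitone_nat_of_succ_le hmono
  rw [Metric.tendsto_atTop]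
  intro ε hε
  have hcau : CauchySeq (fun m => ∑ j ∈ Finset.range m, a j) := hsum.hasSum.tendsto_sum_nat.cauchySeq
  obtain ⟨N, hN⟩ := Metric.cauchySeq_iff'.1 hcau (ε/3) (by linarith)
  refine ⟨2 * N + 1, fun k hk => ?_⟩
  have hNk : N ≤ k := by omega
  have htail : ∑ j ∈ Finset.Ico N k, a j < ε / 3 := by
    have := hN k hNk
    rw [Real.dist_eq] at this
    have hdiff : ∑ j ∈ Finset.range k, a j - ∑ j ∈ Finset.range N, a j = ∑ j ∈ Finset.Ico N k, a j := by
      rw [Finset.sum_Ico_eq_sub _ hNk]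
    calc ∑ j ∈ Finset.Ico N k, a j = ∑ j ∈ Finset.range k, a j - ∑ j ∈ Finset.range N, a j := hdiff.symm
      _ ≤ |∑ j ∈ Finset.range k, a j - ∑ j ∈ Finset.range N, a j| := le_abs_self _
      _ < ε / 3 := this
  have hcard : (k - N) • a k ≤ ∑ j ∈ Finset.Ico N k, a j := by
    rw [← Nat.card_Ico N k]
    exact Finset.card_nsmul_le_sum _ _ _ (fun j hj => hanti (le_of_lt (Finset.mem_Ico.1 hj).2))
  rw [nsmul_eq_mul] at hcard
  have hcast : ((k - N : ℕ) : ℝ) = (k : ℝ) - N := by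
    rw [Nat.cast_sub hNk]
  have hk2 : (k : ℝ) ≤ 2 * ((k:ℝ) - N) := by
    have h2N : (2 * N : ℕ) ≤ k := by omega
    have h2N' : ((2 * N : ℕ) : ℝ) ≤ (k : ℕ) := Nat.cast_le.2 h2N
    push_cast at h2N'
    linarith
  have hka : (k : ℝ) * a k ≤ 2 * (ε/3) := by
    calc (k:ℝ) * a k ≤ 2 * ((k:ℝ) - N) * a k := by
          apply mul_le_mul_of_nonneg_right hk2 (ha k)
      _ = 2 * (((k - N:ℕ):ℝ) * a k) := by rw [hcast]; ring
      _ ≤ 2 * ∑ j ∈ Finset.Ico N k, a j := by linarith [hcard]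
      _ ≤ 2 * (ε/3) := by linarith [htail]
  rw [Real.dist_eq, sub_zero, abs_of_nonneg (mul_nonneg (Nat.cast_nonneg k) (ha k))]
  linarith

lemma key_seq (F H : ℕ → ℝ) (c : ℝ) (hc : 0 ≤ c) (hF0 : ∀ k, 0 ≤ F k) (hH0 : ∀ k, 0 ≤ H k)
    (hmono : ∀ k, F (k+1) ≤ F k)
    (hrec : ∀ k, H (k+1) ≤ H k - 2 * F k + c * (F k - F (k+1))) :
    Tendsto (fun k : ℕ => (k:ℝ) * F k) atTop (nhds 0) := by
  have hsum : Summable F := by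
    apply summable_of_sum_range_le (c := (H 0 + c * F 0) / 2) hF0
    intro m
    have htele : ∀ m, H m + 2 * ∑ j ∈ Finset.range m, F j ≤ H 0 + c * (F 0 - F m) := by
      intro m
      induction m with
      | zero => simp
      | succ m ih =>
        rw [Finset.sum_range_succ]
        have := hrec m
        have hmm : F (m+1) ≤ F m := hmono m
        nlinarith [hF0 (m+1), hF0 m]
    have h1 := htele m
    have h2 : c * (F 0 - F m) ≤ c * F 0 := by
      have := hF0 m
      nlinarith
    have := hH0 m
    linarith
  exact nat_mul_tendsto_zero F hF0 hmono hsum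




/-- The random trajectory of a coordinate-type method: `traj step x0 k ι` is the
`k`-th iterate obtained from `x0` when the coordinates chosen at iterations
`0, …, k−1` are `ι 0, …, ι (k−1)`. -/
def traj {E : Type*} {n : ℕ} (step : E → Fin n → E) (x0 : E) :
    ∀ k : ℕ, (Fin k → Fin n) → E
  | 0, _ => x0
  | k + 1, ι => step (traj step x0 k fun t => ι t.castSucc) (ι (Fin.last k))

lemma exp_step {Eu : Type*} {n k : ℕ} (p : Fin n → ℝ) (step : Eu → Fin n → Eu) (x0 : Eu) (φ : Eu → ℝ) :
    (∑ ι : Fin (k+1) → Fin n, (∏ t, p (ι t)) * φ (traj step x0 (k+1) ι))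
    = ∑ ι : Fin k → Fin n, (∏ t, p (ι t)) * ∑ i, p i * φ (step (traj step x0 k ι) i) := by
  let e : ((Fin k → Fin n) × Fin n) ≃ (Fin (k+1) → Fin n) :=
    { toFun := fun σ => Fin.snoc σ.1 σ.2
      invFun := fun ι => (fun t => ι t.castSucc, ι (Fin.last k))
      left_inv := fun σ => by
        ext t
        · simp [Fin.snoc_castSucc]
        · simp [Fin.snoc_last]
      right_inv := fun ι => by
        funext t
        simp [Fin.snoc_castSucc, Fin.snoc_last]
        exact congrFun (Fin.snoc_init_self ι) t }
  rw [← Fintype.sum_equiv e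
    (fun σ => (∏ t, p (σ.1 t)) * (p σ.2 * φ (step (traj step x0 k σ.1) σ.2)))
    (fun ι => (∏ t, p (ι t)) * φ (traj step x0 (k+1) ι)) ?_]
  · rw [Fintype.sum_prod_type]
    congr 1
    funext σ
    rw [Finset.mul_sum]
  · intro σ
    have htraj : traj step x0 (k+1) (Fin.snoc σ.1 σ.2) = step (traj step x0 k σ.1) σ.2 := by
      show step (traj step x0 k fun t => (Fin.snoc σ.1 σ.2 : Fin (k+1) → Fin n) t.castSucc) _ = _
      simp [Fin.snoc_castSucc, Fin.snoc_last]
    have hprod : (∏ t : Fin (k+1), p ((Fin.snoc σ.1 σ.2 : Fin (k+1) → Fin n) t))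
        = (∏ t : Fin k, p (σ.1 t)) * p σ.2 := by
      rw [Fin.prod_univ_castSucc]
      simp [Fin.snoc_castSucc, Fin.snoc_last]
    show (∏ t, p (σ.1 t)) * (p σ.2 * φ (step (traj step x0 k σ.1) σ.2))
      = (∏ t : Fin (k+1), p ((Fin.snoc σ.1 σ.2 : Fin (k+1) → Fin n) t))
        * φ (traj step x0 (k+1) (Fin.snoc σ.1 σ.2))
    rw [htraj, hprod]
    ring

lemma weight_sum {n : ℕ} (p : Fin n → ℝ) (hpsum : ∑ i, p i = 1) (k : ℕ) :
    (∑ ι : Fin k → Fin n, ∏ t, p (ι t)) = 1 := by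
  rw [← Fintype.sum_pow, hpsum, one_pow]

lemma exp_mono {Eu : Type*} {n : ℕ} (p : Fin n → ℝ) (hpnn : ∀ i, 0 ≤ p i)
    (step : Eu → Fin n → Eu) (x0 : Eu) (φ ψ : Eu → ℝ)
    (hpw : ∀ x, (∑ i, p i * φ (step x i)) ≤ ψ x) (k : ℕ) :
    (∑ ι : Fin (k+1) → Fin n, (∏ t, p (ι t)) * φ (traj step x0 (k+1) ι))
    ≤ ∑ ι : Fin k → Fin n, (∏ t, p (ι t)) * ψ (traj step x0 k ι) := by
  rw [exp_step]
  apply Finset.sum_le_sum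
  intro ι _
  exact mul_le_mul_of_nonneg_left (hpw _) (Finset.prod_nonneg fun t _ => hpnn _)

lemma exp_linear {Eu : Type*} {n : ℕ} (p : Fin n → ℝ) (hpsum : ∑ i, p i = 1)
    (step : Eu → Fin n → Eu) (x0 : Eu) (φ ψ χ : Eu → ℝ) (a b c d : ℝ) (k : ℕ) :
    (∑ ι : Fin k → Fin n, (∏ t, p (ι t)) *
      (a * φ (traj step x0 k ι) + b * ψ (traj step x0 k ι) + c * χ (traj step x0 k ι) + d))
    = a * (∑ ι : Fin k → Fin n, (∏ t, p (ι t)) * φ (traj step x0 k ι))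
      + b * (∑ ι : Fin k → Fin n, (∏ t, p (ι t)) * ψ (traj step x0 k ι))
      + c * (∑ ι : Fin k → Fin n, (∏ t, p (ι t)) * χ (traj step x0 k ι)) + d := by
  have h : ∀ ι : Fin k → Fin n, (∏ t, p (ι t)) *
      (a * φ (traj step x0 k ι) + b * ψ (traj step x0 k ι) + c * χ (traj step x0 k ι) + d)
      = a * ((∏ t, p (ι t)) * φ (traj step x0 k ι)) + b * ((∏ t, p (ι t)) * ψ (traj step x0 k ι))
        + c * ((∏ t, p (ι t)) * χ (traj step x0 k ι)) + d * (∏ t, p (ι t)) := fun ι => by ring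
  rw [Finset.sum_congr rfl fun ι _ => h ι, Finset.sum_add_distrib, Finset.sum_add_distrib,
    Finset.sum_add_distrib, ← Finset.mul_sum, ← Finset.mul_sum, ← Finset.mul_sum, ← Finset.mul_sum,
    weight_sum p hpsum, mul_one]

/-- **Theorem 3 of the paper.** Stochastic coordinate descent with
i.i.d. coordinate sampling (probabilities `pᵢ ≥ p_min > 0`) satisfies
`E[f(x_k)] − f* = o(1/k)`, where the expectation is over the random indices. -/
theorem coordinate_descent_o_one_div_k
    {n : ℕ}
    (f : EuclideanSpace ℝ (Fin n) → ℝ)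
    (f' : EuclideanSpace ℝ (Fin n) → EuclideanSpace ℝ (Fin n))
    (hconv : ConvexOn ℝ Set.univ f)
    (hderiv : ∀ y, HasGradientAt f (f' y) y)
    (Li : Fin n → ℝ) (hLi : ∀ i, 0 < Li i)
    (hcoordlip : ∀ (y : EuclideanSpace ℝ (Fin n)) (i : Fin n) (h : ℝ),
      |f' (y + h • EuclideanSpace.single i 1) i - f' y i| ≤ Li i * |h|)
    (Lbar : Fin n → ℝ) (hLbar : ∀ i, Li i ≤ Lbar i)
    (xstar : EuclideanSpace ℝ (Fin n)) (hxstar : ∀ y, f xstar ≤ f y)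
    (p : Fin n → ℝ) (pmin : ℝ) (hpmin : 0 < pmin)
    (hp : ∀ i, pmin ≤ p i) (hpsum : ∑ i, p i = 1)
    (x0 : EuclideanSpace ℝ (Fin n)) :
    Filter.Tendsto
      (fun k : ℕ => (k : ℝ) *
        ((∑ ι : Fin k → Fin n, (∏ t, p (ι t)) *
            f (traj (fun z i => z - (f' z i / Lbar i) • EuclideanSpace.single i 1)
                x0 k ι)) - f xstar))
      Filter.atTop (nhds 0) := by
  have hppos : ∀ i, 0 < p i := fun i => lt_of_lt_of_le hpmin (hp i)
  have hpnn : ∀ i, (0:ℝ) ≤ p i := fun i => (hppos i).le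
  have hLb : ∀ i, 0 < Lbar i := fun i => lt_of_lt_of_le (hLi i) (hLbar i)
  set step : EuclideanSpace ℝ (Fin n) → Fin n → EuclideanSpace ℝ (Fin n) :=
    fun z i => z - (f' z i / Lbar i) • EuclideanSpace.single i 1 with hstepdef
  set V : EuclideanSpace ℝ (Fin n) → ℝ :=
    fun z => ∑ i, (Lbar i / p i) * (z i - xstar i)^2 with hVdef
  set S : EuclideanSpace ℝ (Fin n) → ℝ :=
    fun z => ∑ i, (f' z i)^2 / Lbar i with hSdef
  -- pointwise descent
  have pw1 : ∀ x i, f (step x i) ≤ f x - (f' x i)^2 / (2 * Lbar i) := by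
    intro x i
    have hstep : step x i = x + (-(f' x i / Lbar i)) • EuclideanSpace.single i 1 := by
      simp only [hstepdef]
      rw [sub_eq_add_neg, ← neg_smul]
    have hd := descent_lemma f f' hderiv Li hcoordlip x i (-(f' x i / Lbar i))
    rw [← hstep] at hd
    set g := f' x i
    set L := Lbar i
    have hLne : L ≠ 0 := (hLb i).ne'
    have hu : (0:ℝ) ≤ g^2 / L^2 := by positivity
    have e1 : g * (-(g/L)) = -(L * (g^2/L^2)) := by
      field_simp
    have e2 : (-(g/L))^2 = g^2/L^2 := by rw [neg_sq, div_pow]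
    have e3 : g^2/(2*L) = L * (g^2/L^2)/2 := by
      field_simp
    rw [e1, e2] at hd
    rw [e3]
    nlinarith [mul_le_mul_of_nonneg_right (hLbar i) hu]
  have hSnn : ∀ x, 0 ≤ S x := by
    intro x
    rw [hSdef]
    apply Finset.sum_nonneg
    intro i _
    have := hLb i
    positivity
  have pw1' : ∀ x, (∑ i, p i * f (step x i)) ≤ f x - (pmin/2) * S x := by
    intro x
    have ha : (∑ i, p i * f (step x i)) ≤ ∑ i, p i * (f x - (f' x i)^2/(2*Lbar i)) := by
      apply Finset.sum_le_sum
      intro i _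
      exact mul_le_mul_of_nonneg_left (pw1 x i) (hpnn i)
    have hb : (∑ i, p i * (f x - (f' x i)^2/(2*Lbar i)))
        = f x - ∑ i, p i * ((f' x i)^2/(2*Lbar i)) := by
      simp only [mul_sub]
      rw [Finset.sum_sub_distrib, ← Finset.sum_mul, hpsum, one_mul]
    have hc : (pmin/2) * S x ≤ ∑ i, p i * ((f' x i)^2/(2*Lbar i)) := by
      rw [hSdef, Finset.mul_sum]
      apply Finset.sum_le_sum
      intro i _
      have ht : (0:ℝ) ≤ (f' x i)^2 / Lbar i := by have := hLb i; positivity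
      have h1 := mul_le_mul_of_nonneg_right (hp i) ht
      have h2 : p i * ((f' x i)^2/(2*Lbar i)) = p i * ((f' x i)^2/Lbar i) / 2 := by
        ring
      have h3 : pmin/2 * ((f' x i)^2/Lbar i) = pmin * ((f' x i)^2/Lbar i) / 2 := by ring
      rw [h2, h3]
      linarith
    linarith
  -- coordinates of step
  have hstepco : ∀ x (i j : Fin n), step x i j = x j - (if j = i then f' x i / Lbar i else 0) := by
    intro x i j
    rw [hstepdef]
    simp [mul_ite]
  -- pointwise V recursion
  have pw2 : ∀ x, (∑ i, p i * V (step x i)) ≤ V x - 2*(f x - f xstar) + S x := by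
    intro x
    have hV2 : ∀ i, V (step x i)
        = V x - (2/p i) * (f' x i * (x i - xstar i)) + (f' x i)^2/(Lbar i * p i) := by
      intro i
      have hV1 : V (step x i) - V x
          = (Lbar i/p i) * ((x i - f' x i/Lbar i - xstar i)^2 - (x i - xstar i)^2) := by
        rw [hVdef]
        rw [← Finset.sum_sub_distrib]
        rw [Finset.sum_eq_single i]
        · have hsc : step x i i = x i - f' x i / Lbar i := by
            rw [hstepco]; simp
          rw [hsc]
          ring
        · intro j _ hj
          rw [hstepco, if_neg hj]
          ring
        · intro h
          exact absurd (Finset.mem_univ i) h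
      have expand : (Lbar i/p i) * ((x i - f' x i/Lbar i - xstar i)^2 - (x i - xstar i)^2)
          = -((2/p i) * (f' x i * (x i - xstar i))) + (f' x i)^2/(Lbar i * p i) := by
        have h1 : Lbar i ≠ 0 := (hLb i).ne'
        have h2 : p i ≠ 0 := (hppos i).ne'
        field_simp
        ring
      linarith [hV1, expand]
    have hterm : ∀ i, p i * V (step x i)
        = p i * V x - 2 * (f' x i * (x i - xstar i)) + (f' x i)^2 / Lbar i := by
      intro i
      rw [hV2 i]
      have hpne : p i ≠ 0 := (hppos i).ne'
      have hLne : Lbar i ≠ 0 := (hLb i).ne'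
      field_simp
    have hsum : (∑ i, p i * V (step x i))
        = V x - 2 * (∑ i, f' x i * (x i - xstar i)) + S x := by
      rw [Finset.sum_congr rfl fun i _ => hterm i]
      rw [Finset.sum_add_distrib, Finset.sum_sub_distrib, ← Finset.sum_mul, hpsum, one_mul,
        ← Finset.mul_sum]
    have hconvx : f x - f xstar ≤ ∑ i, f' x i * (x i - xstar i) := by
      have hg := grad_ineq f f' hconv hderiv x xstar
      have hinner : (inner ℝ (f' x) (xstar - x) : ℝ) = ∑ i, f' x i * (xstar i - x i) := by
        rw [PiLp.inner_apply]
        apply Finset.sum_congr rfl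
        intro i _
        simp [mul_comm]
      have hneg : (∑ i, f' x i * (xstar i - x i)) = -∑ i, f' x i * (x i - xstar i) := by
        rw [← Finset.sum_neg_distrib]
        apply Finset.sum_congr rfl
        intro i _
        ring
      rw [hinner, hneg] at hg
      linarith
    rw [hsum]
    linarith
  -- expectation sequences
  set Ef : ℕ → ℝ := fun k => ∑ ι : Fin k → Fin n, (∏ t, p (ι t)) * f (traj step x0 k ι) with hEf
  set EV : ℕ → ℝ := fun k => ∑ ι : Fin k → Fin n, (∏ t, p (ι t)) * V (traj step x0 k ι) with hEV
  set ES : ℕ → ℝ := fun k => ∑ ι : Fin k → Fin n, (∏ t, p (ι t)) * S (traj step x0 k ι) with hES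
  have wnn : ∀ (k : ℕ) (ι : Fin k → Fin n), (0:ℝ) ≤ ∏ t, p (ι t) :=
    fun k ι => Finset.prod_nonneg fun t _ => hpnn _
  have hFlb : ∀ k, f xstar ≤ Ef k := by
    intro k
    rw [hEf]
    calc f xstar = (∑ ι : Fin k → Fin n, ∏ t, p (ι t)) * f xstar := by
          rw [weight_sum p hpsum, one_mul]
      _ = ∑ ι : Fin k → Fin n, (∏ t, p (ι t)) * f xstar := by rw [Finset.sum_mul]
      _ ≤ _ := Finset.sum_le_sum fun ι _ => mul_le_mul_of_nonneg_left (hxstar _) (wnn k ι)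
  have hESnn : ∀ k, 0 ≤ ES k := by
    intro k
    rw [hES]
    exact Finset.sum_nonneg fun ι _ => mul_nonneg (wnn k ι) (hSnn _)
  have hEVnn : ∀ k, 0 ≤ EV k := by
    intro k
    rw [hEV]
    apply Finset.sum_nonneg
    intro ι _
    apply mul_nonneg (wnn k ι)
    rw [hVdef]
    apply Finset.sum_nonneg
    intro i _
    have := hLb i
    have := hppos i
    positivity
  have E1 : ∀ k, Ef (k+1) ≤ Ef k - (pmin/2) * ES k := by
    intro k
    have hm := exp_mono p hpnn step x0 f
      (fun x => 1 * f x + (-(pmin/2)) * S x + 0 * V x + 0)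
      (fun x => by have := pw1' x; show _ ≤ 1 * f x + -(pmin/2) * S x + 0 * V x + 0; linarith) k
    have hl := exp_linear p hpsum step x0 f S V 1 (-(pmin/2)) 0 0 k
    simp only [hEf, hES]
    calc (∑ ι : Fin (k+1) → Fin n, (∏ t, p (ι t)) * f (traj step x0 (k+1) ι))
        ≤ _ := hm
      _ = _ := hl
      _ ≤ (∑ ι : Fin k → Fin n, (∏ t, p (ι t)) * f (traj step x0 k ι))
          - pmin / 2 * ∑ ι : Fin k → Fin n, (∏ t, p (ι t)) * S (traj step x0 k ι) := by
        linarith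
  have E2 : ∀ k, EV (k+1) ≤ EV k - 2*(Ef k - f xstar) + ES k := by
    intro k
    have hm := exp_mono p hpnn step x0 V
      (fun x => (-2) * f x + 1 * V x + 1 * S x + 2 * f xstar)
      (fun x => by have := pw2 x; show _ ≤ -2 * f x + 1 * V x + 1 * S x + 2 * f xstar; linarith) k
    have hl := exp_linear p hpsum step x0 f V S (-2) 1 1 (2 * f xstar) k
    simp only [hEf, hEV, hES]
    calc (∑ ι : Fin (k+1) → Fin n, (∏ t, p (ι t)) * V (traj step x0 (k+1) ι))
        ≤ _ := hm
      _ = _ := hl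
      _ ≤ (∑ ι : Fin k → Fin n, (∏ t, p (ι t)) * V (traj step x0 k ι))
          - 2 * ((∑ ι : Fin k → Fin n, (∏ t, p (ι t)) * f (traj step x0 k ι)) - f xstar)
          + ∑ ι : Fin k → Fin n, (∏ t, p (ι t)) * S (traj step x0 k ι) := by
        linarith
  have main := key_seq (fun k => Ef k - f xstar) EV (2/pmin)
    (by positivity)
    (fun k => sub_nonneg.2 (hFlb k))
    hEVnn
    (fun k => by
      have h1 := E1 k
      have h2 : 0 ≤ (pmin/2) * ES k := mul_nonneg (by positivity) (hESnn k)
      linarith)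
    (fun k => by
      have h5 : ES k ≤ (2/pmin) * ((Ef k - f xstar) - (Ef (k+1) - f xstar)) := by
        rw [div_mul_eq_mul_div, le_div_iff₀ hpmin]
        have := E1 k
        nlinarith
      have h6 := E2 k
      linarith)
  simpa only [hEf] using main
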